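/- Let a₂ : [0,1] → ℝ be single-crossing at t* (a₂(t) ≤ 0 for t ≤ t*, a₂(t) ≥ 0 for t ≥ t*) with ∫₀¹ a₂(t) dt ≥ 0. Then for every monotone increasing nonnegative function a₁ : [0,1] → ℝ, ∫₀¹ a₁(t)·a₂(t) dt ≥ 0. -/
import Mathlib


open MeasureTheory Set intervalIntegral

theorem single_crossing_nonneg_integral
    (a₁ a₂ : ℝ → ℝ) (tstar : ℝ) (hts : tstar ∈ Icc (0:ℝ) 1)
    (hneg : ∀ t ∈ Icc (0:ℝ) tstar, a₂ t ≤ 0)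
    (hpos : ∀ t ∈ Icc tstar (1:ℝ), 0 ≤ a₂ t)
    (hint2 : IntervalIntegrable a₂ volume 0 1)
    (hintpos : (0:ℝ) ≤ ∫ t in (0:ℝ)..1, a₂ t)
    (hmono : MonotoneOn a₁ (Icc (0:ℝ) 1))
    (hnonneg : ∀ t ∈ Icc (0:ℝ) 1, 0 ≤ a₁ t)
    (hint12 : IntervalIntegrable (fun t => a₁ t * a₂ t) volume 0 1) :
    (0:ℝ) ≤ ∫ t in (0:ℝ)..1, a₁ t * a₂ t := by
  obtain ⟨h0, h1⟩ := hts
  set c := a₁ tstar with hc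
  have hc0 : 0 ≤ c := hnonneg tstar ⟨h0, h1⟩
  have hsub1 : Set.uIcc (0:ℝ) tstar ⊆ Set.uIcc (0:ℝ) 1 :=
    Set.uIcc_subset_uIcc (by simp) (by simp [Set.uIcc_of_le, h0, h1, Set.mem_Icc])
  have hsub2 : Set.uIcc tstar (1:ℝ) ⊆ Set.uIcc (0:ℝ) 1 :=
    Set.uIcc_subset_uIcc (by simp [Set.uIcc_of_le, h0, h1, Set.mem_Icc]) (by simp)
  have hi1 : IntervalIntegrable (fun t => a₁ t * a₂ t) volume 0 tstar :=
    hint12.mono_set hsub1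
  have hi2 : IntervalIntegrable (fun t => a₁ t * a₂ t) volume tstar 1 :=
    hint12.mono_set hsub2
  have hj1 : IntervalIntegrable (fun t => c * a₂ t) volume 0 tstar :=
    (hint2.mono_set hsub1).const_mul c
  have hj2 : IntervalIntegrable (fun t => c * a₂ t) volume tstar 1 :=
    (hint2.mono_set hsub2).const_mul c
  have key1 : (∫ t in (0:ℝ)..tstar, c * a₂ t) ≤ ∫ t in (0:ℝ)..tstar, a₁ t * a₂ t := by
    apply intervalIntegral.integral_mono_on h0 hj1 hi1
    intro t ht
    have h2 : a₂ t ≤ 0 := hneg t ht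
    have h1' : a₁ t ≤ c := hmono ⟨ht.1, le_trans ht.2 h1⟩ ⟨h0, h1⟩ ht.2
    nlinarith
  have key2 : (∫ t in tstar..(1:ℝ), c * a₂ t) ≤ ∫ t in tstar..(1:ℝ), a₁ t * a₂ t := by
    apply intervalIntegral.integral_mono_on h1 hj2 hi2
    intro t ht
    have h2 : 0 ≤ a₂ t := hpos t ht
    have h1' : c ≤ a₁ t := hmono ⟨h0, h1⟩ ⟨le_trans h0 ht.1, ht.2⟩ ht.1
    nlinarith
  have split1 : (∫ t in (0:ℝ)..tstar, a₁ t * a₂ t) + ∫ t in tstar..(1:ℝ), a₁ t * a₂ t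
      = ∫ t in (0:ℝ)..1, a₁ t * a₂ t :=
    intervalIntegral.integral_add_adjacent_intervals hi1 hi2
  have split2 : (∫ t in (0:ℝ)..tstar, c * a₂ t) + ∫ t in tstar..(1:ℝ), c * a₂ t
      = ∫ t in (0:ℝ)..1, c * a₂ t :=
    intervalIntegral.integral_add_adjacent_intervals hj1 hj2
  have hca : (∫ t in (0:ℝ)..1, c * a₂ t) = c * ∫ t in (0:ℝ)..1, a₂ t :=
    intervalIntegral.integral_const_mul c a₂
  have : 0 ≤ ∫ t in (0:ℝ)..1, c * a₂ t := by
    rw [hca]; positivity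
  linarith
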